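/- Assume the positivity condition: l_j − L_j(τ) > 0 for every τ ∈ ℝ^ℓ and every j. Define Ψ : [0,1]^ℓ → ℝ^ℓ recursively by Ψ(θ)_j := θ_j · ( l_j − Σ_{i<j} c_{ji} Ψ(θ)_i ). Then Ψ maps [0,1]^ℓ onto the moment polytope Δ := { x ∈ ℝ^ℓ : 0 ≤ x_j ≤ l_j − Σ_{i<j} c_{ji} x_i for all j }, and Ψ restricts to a bijection from the open cube (0,1)^ℓ onto { x ∈ ℝ^ℓ : 0 < x_j < l_j − Σ_{i<j} c_{ji} x_i for all j }. -/

import Mathlib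

open Real Finset

noncomputable section

/-- `K(t) = log(1 + e^{2t})`. -/
def Kfun (t : ℝ) : ℝ := Real.log (1 + Real.exp (2 * t))

/-- `𝒥(t) = e^{2t}/(1 + e^{2t})`. -/
def Jfun (t : ℝ) : ℝ := Real.exp (2 * t) / (1 + Real.exp (2 * t))

/-- The coordinate change `Φ(σ)_i = σ_i + (1/2)·Σ_{j>i} c_{ji} K(σ_j)`. -/
def Phi {ℓ : ℕ} (c : Fin ℓ → Fin ℓ → ℤ) (σ : Fin ℓ → ℝ) : Fin ℓ → ℝ :=
  fun i => σ i + (1 / 2) * ∑ j ∈ Finset.univ.filter (fun j => i < j), (c j i : ℝ) * Kfun (σ j)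

/-- The inverse of the coordinate change `Φ`. -/
def PhiInv {ℓ : ℕ} (c : Fin ℓ → Fin ℓ → ℤ) : (Fin ℓ → ℝ) → (Fin ℓ → ℝ) :=
  Function.invFun (Phi c)

/-- The Kähler potential `K_λ(τ) = Σ_i l_i K(τ̃_i)`, where `τ̃ = Φ⁻¹(τ)`. -/
def Klam {ℓ : ℕ} (l : Fin ℓ → ℤ) (c : Fin ℓ → Fin ℓ → ℤ) (τ : Fin ℓ → ℝ) : ℝ :=
  ∑ i, (l i : ℝ) * Kfun (PhiInv c τ i)

/-- The action variables `J_j(τ) = (1/2)·∂K_λ/∂τ_j`. -/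
def Jact {ℓ : ℕ} (l : Fin ℓ → ℤ) (c : Fin ℓ → Fin ℓ → ℤ) (j : Fin ℓ) (τ : Fin ℓ → ℝ) : ℝ :=
  (1 / 2) * fderiv ℝ (Klam l c) τ (Pi.single j 1)

/-- `L_j(τ) = Σ_{i<j} c_{ji} J_i(τ)`. -/
def Lfun {ℓ : ℕ} (l : Fin ℓ → ℤ) (c : Fin ℓ → Fin ℓ → ℤ) (j : Fin ℓ) (τ : Fin ℓ → ℝ) : ℝ :=
  ∑ i ∈ Finset.univ.filter (fun i => i < j), (c j i : ℝ) * Jact l c i τ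

lemma one_add_exp_pos (t : ℝ) : (0:ℝ) < 1 + Real.exp (2 * t) := by positivity

lemma hasDerivAt_Kfun (t : ℝ) : HasDerivAt Kfun (2 * Jfun t) t := by
  have h1 : HasDerivAt (fun t : ℝ => 2 * t) 2 t := by
    simpa using (hasDerivAt_id t).const_mul 2
  have h2 : HasDerivAt (fun t : ℝ => Real.exp (2 * t)) (Real.exp (2 * t) * 2) t :=
    (Real.hasDerivAt_exp (2 * t)).comp t h1
  have h3 : HasDerivAt (fun t : ℝ => 1 + Real.exp (2 * t)) (Real.exp (2 * t) * 2) t :=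
    h2.const_add 1
  have h4 := h3.log (ne_of_gt (one_add_exp_pos t))
  convert h4 using 1
  · rfl
  unfold Jfun
  field_simp

lemma Jfun_mem_Ioo (t : ℝ) : Jfun t ∈ Set.Ioo (0:ℝ) 1 := by
  constructor
  · exact div_pos (Real.exp_pos _) (one_add_exp_pos t)
  · unfold Jfun
    rw [div_lt_one (one_add_exp_pos t)]; linarith

lemma Jfun_surjOn {θ : ℝ} (h : θ ∈ Set.Ioo (0:ℝ) 1) : ∃ t, Jfun t = θ := by
  obtain ⟨h0, h1⟩ := h
  refine ⟨(1/2) * Real.log (θ / (1 - θ)), ?_⟩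
  have hθ : (0:ℝ) < θ / (1 - θ) := div_pos h0 (by linarith)
  unfold Jfun
  rw [show 2 * ((1/2) * Real.log (θ / (1 - θ))) = Real.log (θ / (1-θ)) by ring,
    Real.exp_log hθ]
  have hne : (1:ℝ) - θ ≠ 0 := by linarith
  field_simp
  ring


section Aux
variable {ℓ : ℕ}

/-- Downward (reverse) strong induction on `Fin ℓ`. -/
lemma revInd {P : Fin ℓ → Prop} (h : ∀ i, (∀ j, i < j → P j) → P i) : ∀ i, P i := by
  have key : ∀ n : ℕ, ∀ i : Fin ℓ, ℓ - (i : ℕ) ≤ n → P i := by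
    intro n
    induction n with
    | zero => intro i hi; exact absurd hi (by have := i.isLt; omega)
    | succ n ih =>
      intro i _
      exact h i (fun j hj => ih j (by have := j.isLt; have : (i:ℕ) < (j:ℕ) := hj; omega))
  exact fun i => key ℓ i (by omega)

/-- Fueled explicit inverse of `Phi`. -/
def sFuel (c : Fin ℓ → Fin ℓ → ℤ) (τ : Fin ℓ → ℝ) : ℕ → Fin ℓ → ℝ
  | 0 => fun _ => 0
  | n+1 => fun i => τ i - (1 / 2) * ∑ j ∈ Finset.univ.filter (fun j => i < j),
      (c j i : ℝ) * Kfun (sFuel c τ n j)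

def sFun (c : Fin ℓ → Fin ℓ → ℤ) (τ : Fin ℓ → ℝ) : Fin ℓ → ℝ := sFuel c τ ℓ

variable (c : Fin ℓ → Fin ℓ → ℤ) (τ : Fin ℓ → ℝ)

lemma sFuel_stable : ∀ n : ℕ, ∀ i : Fin ℓ, ℓ - (i : ℕ) ≤ n →
    sFuel c τ (n+1) i = sFuel c τ n i := by
  intro n
  induction n with
  | zero => intro i hi; exact absurd hi (by have := i.isLt; omega)
  | succ n ih =>
    intro i hi
    show τ i - _ = τ i - _
    congr 1
    congr 1
    apply Finset.sum_congr rfl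
    intro j hj
    simp only [Finset.mem_filter] at hj
    rw [ih j (by have := j.isLt; have : (i:ℕ) < (j:ℕ) := hj.2; omega)]

lemma sFun_fix (i : Fin ℓ) : sFun c τ i = τ i - (1 / 2) *
    ∑ j ∈ Finset.univ.filter (fun j => i < j), (c j i : ℝ) * Kfun (sFun c τ j) := by
  have h := sFuel_stable c τ ℓ i (by omega)
  unfold sFun
  rw [← h]
  rfl

lemma Phi_sFun : Phi c (sFun c τ) = τ := by
  funext i
  unfold Phi
  rw [sFun_fix c τ i]
  ring

lemma Phi_injective : Function.Injective (Phi c) := by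
  intro σ σ' h
  funext i
  induction i using revInd with
  | h i ih =>
    have h1 := congrFun h i
    unfold Phi at h1
    have h2 : ∑ j ∈ Finset.univ.filter (fun j => i < j), (c j i : ℝ) * Kfun (σ j)
        = ∑ j ∈ Finset.univ.filter (fun j => i < j), (c j i : ℝ) * Kfun (σ' j) := by
      apply Finset.sum_congr rfl
      intro j hj
      simp only [Finset.mem_filter] at hj
      rw [ih j hj.2]
    rw [h2] at h1
    linarith

lemma sFun_Phi (σ : Fin ℓ → ℝ) : sFun c (Phi c σ) = σ :=
  Phi_injective c (by rw [Phi_sFun])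

lemma PhiInv_eq : PhiInv c = sFun c := by
  funext τ
  have h1 : Phi c (PhiInv c τ) = τ :=
    Function.invFun_eq ⟨sFun c τ, Phi_sFun c τ⟩
  exact Phi_injective c (by rw [h1, Phi_sFun])

end Aux

section Deriv
variable {ℓ : ℕ} (c : Fin ℓ → Fin ℓ → ℤ) (τ : Fin ℓ → ℝ)

/-- Fueled derivative maps. -/
def LFuel (c : Fin ℓ → Fin ℓ → ℤ) (τ : Fin ℓ → ℝ) : ℕ → Fin ℓ → ((Fin ℓ → ℝ) →L[ℝ] ℝ)
  | 0 => fun _ => 0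
  | n+1 => fun i => ContinuousLinearMap.proj i - ∑ j ∈ Finset.univ.filter (fun j => i < j),
      ((c j i : ℝ) * Jfun (sFun c τ j)) • LFuel c τ n j

def Lmap (c : Fin ℓ → Fin ℓ → ℤ) (τ : Fin ℓ → ℝ) : Fin ℓ → ((Fin ℓ → ℝ) →L[ℝ] ℝ) :=
  LFuel c τ ℓ

lemma LFuel_stable : ∀ n : ℕ, ∀ i : Fin ℓ, ℓ - (i : ℕ) ≤ n →
    LFuel c τ (n+1) i = LFuel c τ n i := by
  intro n
  induction n with
  | zero => intro i hi; exact absurd hi (by have := i.isLt; omega)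
  | succ n ih =>
    intro i hi
    show ContinuousLinearMap.proj i - _ = ContinuousLinearMap.proj i - _
    congr 1
    apply Finset.sum_congr rfl
    intro j hj
    simp only [Finset.mem_filter] at hj
    rw [ih j (by have := j.isLt; have : (i:ℕ) < (j:ℕ) := hj.2; omega)]

lemma Lmap_fix (i : Fin ℓ) : Lmap c τ i = ContinuousLinearMap.proj i -
    ∑ j ∈ Finset.univ.filter (fun j => i < j),
      ((c j i : ℝ) * Jfun (sFun c τ j)) • Lmap c τ j := by
  have h := LFuel_stable c τ ℓ i (by omega)
  unfold Lmap
  rw [← h]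
  rfl

lemma hasFDerivAt_sFun (i : Fin ℓ) :
    HasFDerivAt (fun τ' => sFun c τ' i) (Lmap c τ i) τ := by
  induction i using revInd with
  | h i ih =>
    have heq : (fun τ' => sFun c τ' i) = (fun τ' => τ' i - (1 / 2) *
        ∑ j ∈ Finset.univ.filter (fun j => i < j), (c j i : ℝ) * Kfun (sFun c τ' j)) :=
      funext fun τ' => sFun_fix c τ' i
    rw [heq]
    have h1 : HasFDerivAt (fun τ' : Fin ℓ → ℝ => τ' i)
        (ContinuousLinearMap.proj (R := ℝ) (φ := fun _ : Fin ℓ => ℝ) i) τ :=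
      (ContinuousLinearMap.proj (R := ℝ) (φ := fun _ : Fin ℓ => ℝ) i).hasFDerivAt
    have h2 : HasFDerivAt (fun τ' => ∑ j ∈ Finset.univ.filter (fun j => i < j),
        (c j i : ℝ) * Kfun (sFun c τ' j))
        (∑ j ∈ Finset.univ.filter (fun j => i < j),
          (c j i : ℝ) • ((2 * Jfun (sFun c τ j)) • Lmap c τ j)) τ := by
      apply HasFDerivAt.fun_sum
      intro j hj
      simp only [Finset.mem_filter] at hj
      have hK : HasFDerivAt (fun τ' => Kfun (sFun c τ' j))
          ((2 * Jfun (sFun c τ j)) • Lmap c τ j) τ :=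
        (hasDerivAt_Kfun (sFun c τ j)).comp_hasFDerivAt (h₂ := Kfun) (f := fun τ' => sFun c τ' j) τ (ih j hj.2)
      exact hK.const_mul _
    have h3 := h1.fun_sub (h2.const_mul (1/2 : ℝ))
    refine h3.congr_fderiv ?_
    rw [Lmap_fix c τ i]
    congr 1
    rw [Finset.smul_sum]
    apply Finset.sum_congr rfl
    intro j hj
    ext v
    simp only [ContinuousLinearMap.smul_apply, smul_eq_mul]
    ring

end Deriv

section JactComp
variable {ℓ : ℕ} (l : Fin ℓ → ℤ) (c : Fin ℓ → Fin ℓ → ℤ) (τ : Fin ℓ → ℝ)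

lemma hasFDerivAt_Klam : HasFDerivAt (Klam l c)
    (∑ i, (l i : ℝ) • ((2 * Jfun (sFun c τ i)) • Lmap c τ i)) τ := by
  have heq : Klam l c = fun τ' => ∑ i, (l i : ℝ) * Kfun (sFun c τ' i) := by
    funext τ'
    unfold Klam
    rw [PhiInv_eq]
  rw [heq]
  apply HasFDerivAt.fun_sum
  intro i _
  exact ((hasDerivAt_Kfun (sFun c τ i)).comp_hasFDerivAt (h₂ := Kfun) (f := fun τ' => sFun c τ' i) τ
    (hasFDerivAt_sFun c τ i)).const_mul _

lemma Jact_eq (j : Fin ℓ) : Jact l c j τ =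
    ∑ i, (l i : ℝ) * Jfun (sFun c τ i) * (Lmap c τ i (Pi.single j 1)) := by
  unfold Jact
  rw [(hasFDerivAt_Klam l c τ).fderiv]
  rw [ContinuousLinearMap.sum_apply, Finset.mul_sum]
  apply Finset.sum_congr rfl
  intro i _
  simp only [ContinuousLinearMap.smul_apply, smul_eq_mul]
  ring

end JactComp

section Algebra
variable {ℓ : ℕ}

lemma sum_filter_comm' {M : Type*} [AddCommMonoid M] (f : Fin ℓ → Fin ℓ → M)
    (p p' : Fin ℓ → Prop) [DecidablePred p] [DecidablePred p']
    (q q' : Fin ℓ → Fin ℓ → Prop) [∀ i, DecidablePred (q i)] [∀ k, DecidablePred (q' k)]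
    (h : ∀ i k, (p i ∧ q i k) ↔ (p' k ∧ q' k i)) :
    ∑ i ∈ Finset.univ.filter p, ∑ k ∈ Finset.univ.filter (q i), f i k
      = ∑ k ∈ Finset.univ.filter p', ∑ i ∈ Finset.univ.filter (q' k), f i k := by
  have lhs : ∑ i ∈ Finset.univ.filter p, ∑ k ∈ Finset.univ.filter (q i), f i k
      = ∑ i : Fin ℓ, ∑ k : Fin ℓ, (if p i ∧ q i k then f i k else 0) := by
    rw [Finset.sum_filter]
    refine Finset.sum_congr rfl fun i _ => ?_
    by_cases hp : p i
    · simp only [hp, if_true, true_and, Finset.sum_filter]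
    · simp [hp]
  have rhs : ∑ k ∈ Finset.univ.filter p', ∑ i ∈ Finset.univ.filter (q' k), f i k
      = ∑ k : Fin ℓ, ∑ i : Fin ℓ, (if p' k ∧ q' k i then f i k else 0) := by
    rw [Finset.sum_filter]
    refine Finset.sum_congr rfl fun k _ => ?_
    by_cases hp : p' k
    · simp only [hp, if_true, true_and, Finset.sum_filter]
    · simp [hp]
  rw [lhs, rhs, Finset.sum_comm]
  exact Finset.sum_congr rfl fun k _ => Finset.sum_congr rfl fun i _ => by rw [if_congr (h i k) rfl rfl]

variable (C : Fin ℓ → Fin ℓ → ℝ) (a : Fin ℓ → ℝ) (m : Fin ℓ → Fin ℓ → ℝ)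
variable (hm : ∀ j i, m j i = (if i = j then 1 else 0)
    - ∑ k ∈ Finset.univ.filter (fun k => i < k), (C k i * a k) * m j k)

include hm

lemma m_zero : ∀ j i, j < i → m j i = 0 := by
  intro j i
  induction i using revInd with
  | h i ih =>
    intro hji
    rw [hm j i, if_neg (Ne.symm (Fin.ne_of_lt hji))]
    rw [zero_sub, neg_eq_zero]
    apply Finset.sum_eq_zero
    intro k hk
    simp only [Finset.mem_filter] at hk
    rw [ih k hk.2 (lt_trans hji hk.2), mul_zero]

lemma m_diag (j : Fin ℓ) : m j j = 1 := by
  rw [hm j j, if_pos rfl]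
  have : ∑ k ∈ Finset.univ.filter (fun k => j < k), (C k j * a k) * m j k = 0 := by
    apply Finset.sum_eq_zero
    intro k hk
    simp only [Finset.mem_filter] at hk
    rw [m_zero C a m hm j k hk.2, mul_zero]
  rw [this, sub_zero]

lemma m_key (j : Fin ℓ) : ∀ k, k < j →
    m j k = -(a j) * ∑ i ∈ Finset.univ.filter (fun i => k ≤ i ∧ i < j), C j i * m i k := by
  intro k
  induction k using revInd with
  | h k ih =>
    intro hkj
    have hkj' : k ≠ j := Fin.ne_of_lt hkj
    rw [hm j k, if_neg hkj', zero_sub]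
    -- split the sum over p > k into p = j, k < p < j, and p > j (zero)
    have hsplit : ∑ p ∈ Finset.univ.filter (fun p => k < p), (C p k * a p) * m j p
        = (C j k * a j) * m j j
          + ∑ p ∈ Finset.univ.filter (fun p => k < p ∧ p < j), (C p k * a p) * m j p := by
      rw [← Finset.sum_filter_add_sum_filter_not (Finset.univ.filter (fun p => k < p))
        (fun p => p < j), Finset.filter_filter, Finset.filter_filter]
      rw [add_comm]
      congr 1
      apply Finset.sum_eq_single_of_mem j
      · simp only [Finset.mem_filter, Finset.mem_univ, true_and]
        exact ⟨hkj, lt_irrefl j⟩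
      · intro p hp hpj
        simp only [Finset.mem_filter, Finset.mem_univ, true_and, not_lt] at hp
        have : j < p := lt_of_le_of_ne hp.2 (Ne.symm hpj)
        rw [m_zero C a m hm j p this, mul_zero]
    rw [hsplit, m_diag C a m hm j]
    -- rewrite inner terms with the inductive hypothesis
    have hih : ∑ p ∈ Finset.univ.filter (fun p => k < p ∧ p < j), (C p k * a p) * m j p
        = ∑ p ∈ Finset.univ.filter (fun p => k < p ∧ p < j), (C p k * a p) *
            (-(a j) * ∑ i ∈ Finset.univ.filter (fun i => p ≤ i ∧ i < j), C j i * m i p) := by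
      refine Finset.sum_congr rfl fun p hp => ?_
      simp only [Finset.mem_filter, Finset.mem_univ, true_and] at hp
      rw [ih p hp.1 hp.2]
    rw [hih]
    -- now massage the RHS
    have hrhs : ∑ i ∈ Finset.univ.filter (fun i => k ≤ i ∧ i < j), C j i * m i k
        = C j k + ∑ i ∈ Finset.univ.filter (fun i => k < i ∧ i < j), C j i * m i k := by
      rw [← Finset.sum_filter_add_sum_filter_not
        (Finset.univ.filter (fun i => k ≤ i ∧ i < j)) (fun i => k < i),
        Finset.filter_filter, Finset.filter_filter]
      rw [add_comm]
      congr 1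
      · have hkj2 : (k:ℕ) < (j:ℕ) := hkj
        have hset : Finset.univ.filter (fun i => (k ≤ i ∧ i < j) ∧ ¬k < i) = {k} := by
          ext i
          simp only [Finset.mem_filter, Finset.mem_univ, true_and, Finset.mem_singleton,
            Fin.lt_def, Fin.le_def, ← Fin.val_eq_val]
          omega
        rw [hset, Finset.sum_singleton, m_diag C a m hm k, mul_one]
      · apply Finset.sum_congr
        · apply Finset.filter_congr
          intro i _
          simp only [Fin.lt_def, Fin.le_def]
          constructor
          · omega
          · omega
        · intro i _; rfl
    rw [hrhs]
    -- expand m i k for k < i < j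
    have hexp : ∑ i ∈ Finset.univ.filter (fun i => k < i ∧ i < j), C j i * m i k
        = -∑ i ∈ Finset.univ.filter (fun i => k < i ∧ i < j), C j i *
            ∑ p ∈ Finset.univ.filter (fun p => k < p ∧ p ≤ i), (C p k * a p) * m i p := by
      rw [← Finset.sum_neg_distrib]
      refine Finset.sum_congr rfl fun i hi => ?_
      simp only [Finset.mem_filter, Finset.mem_univ, true_and] at hi
      have : m i k = -∑ p ∈ Finset.univ.filter (fun p => k < p ∧ p ≤ i), (C p k * a p) * m i p := by
        rw [hm i k, if_neg (Fin.ne_of_lt hi.1), zero_sub]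
        congr 1
        rw [← Finset.sum_filter_add_sum_filter_not (Finset.univ.filter (fun p => k < p))
          (fun p => p ≤ i), Finset.filter_filter, Finset.filter_filter]
        have hz : ∑ p ∈ Finset.univ.filter (fun p => k < p ∧ ¬p ≤ i), (C p k * a p) * m i p = 0 := by
          apply Finset.sum_eq_zero
          intro p hp
          simp only [Finset.mem_filter, Finset.mem_univ, true_and, not_le] at hp
          rw [m_zero C a m hm i p hp.2, mul_zero]
        rw [hz, add_zero]
      rw [this, mul_neg]
    rw [hexp]
    -- the double sum swap
    have hswap : ∑ i ∈ Finset.univ.filter (fun i => k < i ∧ i < j),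
          ∑ p ∈ Finset.univ.filter (fun p => k < p ∧ p ≤ i), C j i * ((C p k * a p) * m i p)
        = ∑ p ∈ Finset.univ.filter (fun p => k < p ∧ p < j),
          ∑ i ∈ Finset.univ.filter (fun i => p ≤ i ∧ i < j), C j i * ((C p k * a p) * m i p) := by
      apply sum_filter_comm'
      intro i p
      simp only [Fin.lt_def, Fin.le_def]
      omega
    have hmuls : ∑ i ∈ Finset.univ.filter (fun i => k < i ∧ i < j), C j i *
          ∑ p ∈ Finset.univ.filter (fun p => k < p ∧ p ≤ i), (C p k * a p) * m i p
        = ∑ i ∈ Finset.univ.filter (fun i => k < i ∧ i < j),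
          ∑ p ∈ Finset.univ.filter (fun p => k < p ∧ p ≤ i), C j i * ((C p k * a p) * m i p) := by
      exact Finset.sum_congr rfl fun i _ => by rw [Finset.mul_sum]
    -- finish by ring manipulation
    rw [mul_add, mul_neg, hmuls, hswap]
    have hfin : ∑ p ∈ Finset.univ.filter (fun p => k < p ∧ p < j), (C p k * a p) *
          (-(a j) * ∑ i ∈ Finset.univ.filter (fun i => p ≤ i ∧ i < j), C j i * m i p)
        = -(a j) * ∑ p ∈ Finset.univ.filter (fun p => k < p ∧ p < j),
            ∑ i ∈ Finset.univ.filter (fun i => p ≤ i ∧ i < j), C j i * ((C p k * a p) * m i p) := by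
      rw [Finset.mul_sum]
      refine Finset.sum_congr rfl fun p _ => ?_
      simp only [Finset.mul_sum]
      exact Finset.sum_congr rfl fun i _ => by ring
    rw [hfin]
    ring

lemma m_sum_rec (d : Fin ℓ → ℝ) (j : Fin ℓ) :
    ∑ i, d i * a i * m j i
      = a j * (d j - ∑ i ∈ Finset.univ.filter (fun i => i < j),
          C j i * ∑ k, d k * a k * m i k) := by
  rw [← Finset.sum_filter_add_sum_filter_not Finset.univ (fun i => i < j)]
  have h2 : ∑ i ∈ Finset.univ.filter (fun i => ¬ i < j), d i * a i * m j i
      = d j * a j * m j j := by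
    apply Finset.sum_eq_single_of_mem j (by simp)
    intro i hi hij
    simp only [Finset.mem_filter, Finset.mem_univ, true_and, not_lt] at hi
    rw [m_zero C a m hm j i (lt_of_le_of_ne hi (Ne.symm hij)), mul_zero]
  rw [h2, m_diag C a m hm j, mul_one]
  have h1 : ∑ k ∈ Finset.univ.filter (fun k => k < j), d k * a k * m j k
      = -(a j) * ∑ k ∈ Finset.univ.filter (fun k => k < j),
          ∑ i ∈ Finset.univ.filter (fun i => k ≤ i ∧ i < j), C j i * (d k * a k * m i k) := by
    rw [Finset.mul_sum]
    refine Finset.sum_congr rfl fun k hk => ?_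
    simp only [Finset.mem_filter, Finset.mem_univ, true_and] at hk
    rw [m_key C a m hm j k hk]
    simp only [Finset.mul_sum]
    exact Finset.sum_congr rfl fun i _ => by ring
  rw [h1]
  have hswap : ∑ k ∈ Finset.univ.filter (fun k => k < j),
        ∑ i ∈ Finset.univ.filter (fun i => k ≤ i ∧ i < j), C j i * (d k * a k * m i k)
      = ∑ i ∈ Finset.univ.filter (fun i => i < j),
        ∑ k ∈ Finset.univ.filter (fun k => k ≤ i), C j i * (d k * a k * m i k) := by
    apply sum_filter_comm'
    intro k i
    simp only [Fin.lt_def, Fin.le_def]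
    omega
  rw [hswap]
  have hinner : ∑ i ∈ Finset.univ.filter (fun i => i < j),
        ∑ k ∈ Finset.univ.filter (fun k => k ≤ i), C j i * (d k * a k * m i k)
      = ∑ i ∈ Finset.univ.filter (fun i => i < j), C j i * ∑ k, d k * a k * m i k := by
    refine Finset.sum_congr rfl fun i _ => ?_
    rw [Finset.mul_sum]
    rw [← Finset.sum_filter_add_sum_filter_not Finset.univ (fun k => k ≤ i)
      (fun k => C j i * (d k * a k * m i k))]
    have hz : ∑ k ∈ Finset.univ.filter (fun k => ¬ k ≤ i), C j i * (d k * a k * m i k) = 0 := by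
      apply Finset.sum_eq_zero
      intro k hk
      simp only [Finset.mem_filter, Finset.mem_univ, true_and, not_le] at hk
      rw [m_zero C a m hm i k hk, mul_zero, mul_zero]
    rw [hz, add_zero]
  rw [hinner]
  ring

end Algebra

section JactRec
variable {ℓ : ℕ} (l : Fin ℓ → ℤ) (c : Fin ℓ → Fin ℓ → ℤ) (τ : Fin ℓ → ℝ)

lemma hm_inst : ∀ j i : Fin ℓ, Lmap c τ i (Pi.single j 1) = (if i = j then (1:ℝ) else 0)
    - ∑ k ∈ Finset.univ.filter (fun k => i < k),
        ((c k i : ℝ) * Jfun (sFun c τ k)) * Lmap c τ k (Pi.single j 1) := by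
  intro j i
  rw [Lmap_fix c τ i]
  simp only [ContinuousLinearMap.sub_apply, ContinuousLinearMap.sum_apply,
    ContinuousLinearMap.smul_apply, smul_eq_mul, ContinuousLinearMap.proj_apply]
  rw [Pi.single_apply]

lemma Jact_rec (j : Fin ℓ) : Jact l c j τ = Jfun (sFun c τ j) * ((l j : ℝ) -
    ∑ i ∈ Finset.univ.filter (fun i => i < j), (c j i : ℝ) * Jact l c i τ) := by
  have key := m_sum_rec (fun i k => (c i k : ℝ)) (fun i => Jfun (sFun c τ i))
    (fun j i => Lmap c τ i (Pi.single j 1)) (hm_inst c τ) (fun i => (l i : ℝ)) j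
  rw [Jact_eq l c τ j, key]
  congr 1
  congr 1
  refine Finset.sum_congr rfl fun i _ => ?_
  rw [Jact_eq l c τ i]

end JactRec

section Psi
variable {ℓ : ℕ}

/-- Upward strong induction on `Fin ℓ`. -/
lemma fwdInd {P : Fin ℓ → Prop} (h : ∀ j, (∀ i, i < j → P i) → P j) : ∀ j, P j := by
  have key : ∀ n : ℕ, ∀ j : Fin ℓ, (j : ℕ) < n → P j := by
    intro n
    induction n with
    | zero => intro j hj; omega
    | succ n ih =>
      intro j _
      exact h j (fun i hi => ih i (by have : (i:ℕ) < (j:ℕ) := hi; omega))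
  exact fun j => key ℓ j j.isLt

variable (l : Fin ℓ → ℤ) (c : Fin ℓ → Fin ℓ → ℤ)

def PsiFuel (l : Fin ℓ → ℤ) (c : Fin ℓ → Fin ℓ → ℤ) : ℕ → (Fin ℓ → ℝ) → Fin ℓ → ℝ
  | 0 => fun _ _ => 0
  | n+1 => fun θ j => θ j * ((l j : ℝ) -
      ∑ i ∈ Finset.univ.filter (fun i => i < j), (c j i : ℝ) * PsiFuel l c n θ i)

def PsiFun (θ : Fin ℓ → ℝ) : Fin ℓ → ℝ := PsiFuel l c ℓ θ

lemma PsiFuel_stable : ∀ n : ℕ, ∀ θ, ∀ j : Fin ℓ, (j : ℕ) < n →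
    PsiFuel l c (n+1) θ j = PsiFuel l c n θ j := by
  intro n
  induction n with
  | zero => intro θ j hj; omega
  | succ n ih =>
    intro θ j hj
    show θ j * _ = θ j * _
    congr 2
    refine Finset.sum_congr rfl fun i hi => ?_
    simp only [Finset.mem_filter] at hi
    rw [ih θ i (by have : (i:ℕ) < (j:ℕ) := hi.2; omega)]

lemma PsiFun_fix (θ : Fin ℓ → ℝ) (j : Fin ℓ) : PsiFun l c θ j = θ j * ((l j : ℝ) -
    ∑ i ∈ Finset.univ.filter (fun i => i < j), (c j i : ℝ) * PsiFun l c θ i) := by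
  have h := PsiFuel_stable l c ℓ θ j j.isLt
  unfold PsiFun
  rw [← h]
  rfl

lemma PsiFuel_continuous : ∀ n : ℕ, ∀ j : Fin ℓ, Continuous (fun θ => PsiFuel l c n θ j) := by
  intro n
  induction n with
  | zero => intro j; exact continuous_const
  | succ n ih =>
    intro j
    show Continuous (fun θ : Fin ℓ → ℝ => θ j * _)
    exact (continuous_apply j).mul
      (continuous_const.sub (continuous_finset_sum _ fun i _ => continuous_const.mul (ih i)))

lemma PsiFun_continuous (j : Fin ℓ) : Continuous (fun θ => PsiFun l c θ j) :=
  PsiFuel_continuous l c ℓ j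

/-- Any Ψ satisfying the recursion agrees with `PsiFun`. -/
lemma Psi_unique (Ψ : (Fin ℓ → ℝ) → Fin ℓ → ℝ)
    (hΨ : ∀ θ : Fin ℓ → ℝ, ∀ j : Fin ℓ, Ψ θ j = θ j * ((l j : ℝ) -
      ∑ i ∈ Finset.univ.filter (fun i => i < j), (c j i : ℝ) * Ψ θ i))
    (θ : Fin ℓ → ℝ) : ∀ j, Ψ θ j = PsiFun l c θ j := by
  intro j
  induction j using fwdInd with
  | h j ih =>
    rw [hΨ θ j, PsiFun_fix l c θ j]
    congr 2
    exact Finset.sum_congr rfl fun i hi => by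
      simp only [Finset.mem_filter] at hi
      rw [ih i hi.2]

/-- Key lemma (A): positivity of the slack on the open cube. -/
lemma slack_pos (hpos : ∀ τ : Fin ℓ → ℝ, ∀ j : Fin ℓ, 0 < (l j : ℝ) - Lfun l c j τ)
    (θ : Fin ℓ → ℝ) (hθ : ∀ i, θ i ∈ Set.Ioo (0:ℝ) 1) (j : Fin ℓ) :
    0 < (l j : ℝ) - ∑ i ∈ Finset.univ.filter (fun i => i < j),
      (c j i : ℝ) * PsiFun l c θ i := by
  have hex : ∀ i, ∃ t : ℝ, Jfun t = θ i := fun i => Jfun_surjOn (hθ i)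
  choose t ht using hex
  set τ := Phi c t with hτ
  have hs : sFun c τ = t := sFun_Phi c t
  have hJ : ∀ j, Jact l c j τ = PsiFun l c θ j := by
    intro j
    induction j using fwdInd with
    | h j ih =>
      rw [Jact_rec l c τ j, hs, ht j, PsiFun_fix l c θ j]
      congr 2
      exact Finset.sum_congr rfl fun i hi => by
        simp only [Finset.mem_filter] at hi
        rw [ih i hi.2]
  have h := hpos τ j
  unfold Lfun at h
  calc (0:ℝ) < (l j : ℝ) - ∑ i ∈ Finset.univ.filter (fun i => i < j),
      (c j i : ℝ) * Jact l c i τ := h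
    _ = _ := by
      congr 1
      exact Finset.sum_congr rfl fun i _ => by rw [hJ i]

/-- Key lemma (B): nonnegativity of the slack on the closed cube. -/
lemma slack_nonneg (hpos : ∀ τ : Fin ℓ → ℝ, ∀ j : Fin ℓ, 0 < (l j : ℝ) - Lfun l c j τ)
    (θ : Fin ℓ → ℝ) (hθ : ∀ i, θ i ∈ Set.Icc (0:ℝ) 1) (j : Fin ℓ) :
    0 ≤ (l j : ℝ) - ∑ i ∈ Finset.univ.filter (fun i => i < j),
      (c j i : ℝ) * PsiFun l c θ i := by
  set f : (Fin ℓ → ℝ) → ℝ := fun θ => (l j : ℝ) -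
    ∑ i ∈ Finset.univ.filter (fun i => i < j), (c j i : ℝ) * PsiFun l c θ i with hf
  have hfc : Continuous f :=
    continuous_const.sub (continuous_finset_sum _ fun i _ =>
      continuous_const.mul (PsiFun_continuous l c i))
  have hsub : Set.univ.pi (fun _ : Fin ℓ => Set.Ioo (0:ℝ) 1) ⊆ {θ | 0 ≤ f θ} := by
    intro θ' hθ'
    exact le_of_lt (slack_pos l c hpos θ' (fun i => hθ' i (Set.mem_univ i)) j)
  have hclosed : IsClosed {θ : Fin ℓ → ℝ | 0 ≤ f θ} :=
    isClosed_le continuous_const hfc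
  have hcl : closure (Set.univ.pi (fun _ : Fin ℓ => Set.Ioo (0:ℝ) 1)) ⊆ {θ | 0 ≤ f θ} :=
    hclosed.closure_subset_iff.mpr hsub
  have hmem : θ ∈ closure (Set.univ.pi (fun _ : Fin ℓ => Set.Ioo (0:ℝ) 1)) := by
    rw [closure_pi_set]
    intro i _
    rw [closure_Ioo (zero_ne_one)]
    exact hθ i
  exact hcl hmem

end Psi

/-- Theorem 6.1 ('cubic polytope'): under the positivity condition, the
recursively defined map `Ψ(θ)_j = θ_j·(l_j − Σ_{i<j} c_{ji} Ψ(θ)_i)` maps the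
cube `[0,1]^ℓ` onto the moment polytope `Δ` and restricts to a bijection from
the open cube `(0,1)^ℓ` onto the interior inequalities
`{x : 0 < x_j < l_j − Σ_{i<j} c_{ji} x_i}`. -/
theorem cube_parametrization_of_polytope {ℓ : ℕ} (l : Fin ℓ → ℤ)
    (c : Fin ℓ → Fin ℓ → ℤ)
    (hpos : ∀ τ : Fin ℓ → ℝ, ∀ j : Fin ℓ, 0 < (l j : ℝ) - Lfun l c j τ)
    (Ψ : (Fin ℓ → ℝ) → Fin ℓ → ℝ)
    (hΨ : ∀ θ : Fin ℓ → ℝ, ∀ j : Fin ℓ, Ψ θ j = θ j * ((l j : ℝ) -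
      ∑ i ∈ Finset.univ.filter (fun i => i < j), (c j i : ℝ) * Ψ θ i)) :
    Ψ '' {θ : Fin ℓ → ℝ | ∀ i, θ i ∈ Set.Icc (0 : ℝ) 1} =
      {x : Fin ℓ → ℝ | ∀ j : Fin ℓ, 0 ≤ x j ∧ x j ≤ (l j : ℝ) -
        ∑ i ∈ Finset.univ.filter (fun i => i < j), (c j i : ℝ) * x i} ∧
    Set.BijOn Ψ {θ : Fin ℓ → ℝ | ∀ i, θ i ∈ Set.Ioo (0 : ℝ) 1}
      {x : Fin ℓ → ℝ | ∀ j : Fin ℓ, 0 < x j ∧ x j < (l j : ℝ) -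
        ∑ i ∈ Finset.univ.filter (fun i => i < j), (c j i : ℝ) * x i} := by
  classical
  have hP : ∀ θ j, Ψ θ j = PsiFun l c θ j := Psi_unique l c Ψ hΨ
  have hsum : ∀ (θ : Fin ℓ → ℝ) (j : Fin ℓ),
      ∑ i ∈ Finset.univ.filter (fun i => i < j), (c j i : ℝ) * Ψ θ i
        = ∑ i ∈ Finset.univ.filter (fun i => i < j), (c j i : ℝ) * PsiFun l c θ i :=
    fun θ j => Finset.sum_congr rfl fun i _ => by rw [hP θ i]
  -- slack positivity transported to Ψ
  have hApos : ∀ (θ : Fin ℓ → ℝ), (∀ i, θ i ∈ Set.Ioo (0:ℝ) 1) → ∀ j,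
      0 < (l j : ℝ) - ∑ i ∈ Finset.univ.filter (fun i => i < j), (c j i : ℝ) * Ψ θ i := by
    intro θ hθ j
    rw [hsum θ j]
    exact slack_pos l c hpos θ hθ j
  have hBnn : ∀ (θ : Fin ℓ → ℝ), (∀ i, θ i ∈ Set.Icc (0:ℝ) 1) → ∀ j,
      0 ≤ (l j : ℝ) - ∑ i ∈ Finset.univ.filter (fun i => i < j), (c j i : ℝ) * Ψ θ i := by
    intro θ hθ j
    rw [hsum θ j]
    exact slack_nonneg l c hpos θ hθ j
  constructor
  · -- image of the closed cube
    ext x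
    simp only [Set.mem_image, Set.mem_setOf_eq]
    constructor
    · rintro ⟨θ, hθ, rfl⟩ j
      have hB := hBnn θ hθ j
      constructor
      · rw [hΨ θ j]
        exact mul_nonneg (hθ j).1 hB
      · rw [hΨ θ j]
        calc θ j * ((l j : ℝ) - ∑ i ∈ Finset.univ.filter (fun i => i < j), (c j i : ℝ) * Ψ θ i)
            ≤ 1 * ((l j : ℝ) - ∑ i ∈ Finset.univ.filter (fun i => i < j), (c j i : ℝ) * Ψ θ i) :=
              mul_le_mul_of_nonneg_right (hθ j).2 hB
          _ = _ := one_mul _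
    · intro hx
      refine ⟨fun j => if ((l j : ℝ) - ∑ i ∈ Finset.univ.filter (fun i => i < j),
        (c j i : ℝ) * x i) = 0 then 0
        else x j / ((l j : ℝ) - ∑ i ∈ Finset.univ.filter (fun i => i < j), (c j i : ℝ) * x i),
        ?_, ?_⟩
      · intro j
        by_cases h : ((l j : ℝ) - ∑ i ∈ Finset.univ.filter (fun i => i < j),
            (c j i : ℝ) * x i) = 0
        · simp [h]
        · have hDpos : 0 < (l j : ℝ) - ∑ i ∈ Finset.univ.filter (fun i => i < j),
              (c j i : ℝ) * x i :=
            lt_of_le_of_ne (le_trans (hx j).1 (hx j).2) (Ne.symm h)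
          simp only [h, if_false]
          exact ⟨div_nonneg (hx j).1 (le_of_lt hDpos), (div_le_one hDpos).mpr (hx j).2⟩
      · funext j
        induction j using fwdInd with
        | h j ih =>
          rw [hΨ _ j]
          have hs : ∑ i ∈ Finset.univ.filter (fun i => i < j), (c j i : ℝ) * Ψ _ i
              = ∑ i ∈ Finset.univ.filter (fun i => i < j), (c j i : ℝ) * x i :=
            Finset.sum_congr rfl fun i hi => by
              simp only [Finset.mem_filter] at hi
              rw [ih i hi.2]
          rw [hs]
          by_cases h : ((l j : ℝ) - ∑ i ∈ Finset.univ.filter (fun i => i < j),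
              (c j i : ℝ) * x i) = 0
          · have hx0 : x j = 0 :=
              le_antisymm (h ▸ (hx j).2) (hx j).1
            simp [h, hx0]
          · simp only [h, if_false]
            exact div_mul_cancel₀ _ h
  · -- bijection on the open cube
    refine ⟨?_, ?_, ?_⟩
    · intro θ hθ
      simp only [Set.mem_setOf_eq] at hθ ⊢
      intro j
      have hA := hApos θ hθ j
      constructor
      · rw [hΨ θ j]
        exact mul_pos (hθ j).1 hA
      · rw [hΨ θ j]
        calc θ j * ((l j : ℝ) - ∑ i ∈ Finset.univ.filter (fun i => i < j), (c j i : ℝ) * Ψ θ i)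
            < 1 * ((l j : ℝ) - ∑ i ∈ Finset.univ.filter (fun i => i < j), (c j i : ℝ) * Ψ θ i) :=
              mul_lt_mul_of_pos_right (hθ j).2 hA
          _ = _ := one_mul _
    · intro θ hθ θ' hθ' he
      simp only [Set.mem_setOf_eq] at hθ hθ'
      funext j
      have hA := hApos θ hθ j
      have h1 : θ j * ((l j : ℝ) - ∑ i ∈ Finset.univ.filter (fun i => i < j),
          (c j i : ℝ) * Ψ θ i) = θ' j * ((l j : ℝ) -
          ∑ i ∈ Finset.univ.filter (fun i => i < j), (c j i : ℝ) * Ψ θ i) := by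
        conv_rhs => rw [he]
        rw [← hΨ θ j, ← hΨ θ' j, he]
      exact mul_right_cancel₀ (ne_of_gt hA) h1
    · intro x hx
      simp only [Set.mem_setOf_eq] at hx
      have hD : ∀ j, 0 < (l j : ℝ) - ∑ i ∈ Finset.univ.filter (fun i => i < j),
          (c j i : ℝ) * x i := fun j => lt_trans (hx j).1 (hx j).2
      refine ⟨fun j => x j / ((l j : ℝ) - ∑ i ∈ Finset.univ.filter (fun i => i < j),
        (c j i : ℝ) * x i), ?_, ?_⟩
      · intro j
        exact ⟨div_pos (hx j).1 (hD j), (div_lt_one (hD j)).mpr (hx j).2⟩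
      · funext j
        induction j using fwdInd with
        | h j ih =>
          rw [hΨ _ j]
          have hs : ∑ i ∈ Finset.univ.filter (fun i => i < j), (c j i : ℝ) * Ψ _ i
              = ∑ i ∈ Finset.univ.filter (fun i => i < j), (c j i : ℝ) * x i :=
            Finset.sum_congr rfl fun i hi => by
              simp only [Finset.mem_filter] at hi
              rw [ih i hi.2]
          rw [hs]
          exact div_mul_cancel₀ _ (ne_of_gt (hD j))
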